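/- Let A be a 4×4 skew-symmetric integer matrix with determinant 0. Then either A = 0 or A has rank 2, and in the latter case, if d is the greatest common divisor of the entries of A, the cokernel of A: ℤ⁴ → ℤ⁴ is isomorphic to ℤ/d ⊕ ℤ/d ⊕ ℤ ⊕ ℤ. -/

import Mathlib

section Aux

/-- Product decomposition of a dependent function space over `Fin 4`. -/
def piFin4AddEquiv {B : Fin 4 → Type*} [∀ i, AddCommGroup (B i)] :
    ((i : Fin 4) → B i) ≃+ B 0 × B 1 × B 2 × B 3 where
  toFun x := (x 0, x 1, x 2, x 3)
  invFun y := Fin.cons y.1 <| Fin.cons y.2.1 <| Fin.cons y.2.2.1 <| Fin.cons y.2.2.2 finZeroElim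
  left_inv x := by
    funext i
    fin_cases i <;> rfl
  right_inv y := rfl
  map_add' x y := rfl

end Aux

set_option maxHeartbeats 3200000 in
/-- A 4×4 skew-symmetric integer matrix `A` with `det A = 0` is either zero
or of rank 2, and in the latter case, with `d` the gcd of its entries, the cokernel
`ℤ⁴ / A(ℤ⁴)` is isomorphic to `ℤ/d ⊕ ℤ/d ⊕ ℤ ⊕ ℤ`. -/
theorem stmt11 (A : Matrix (Fin 4) (Fin 4) ℤ)
    (hskew : A.transpose = -A) (hdet : A.det = 0) :
    (A = 0 ∨ A.rank = 2) ∧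
    (A ≠ 0 →
      Nonempty (((Fin 4 → ℤ) ⧸ LinearMap.range (Matrix.toLin' A)) ≃+
        (ZMod ((Finset.univ.gcd fun p : Fin 4 × Fin 4 => A p.1 p.2).natAbs) ×
         ZMod ((Finset.univ.gcd fun p : Fin 4 × Fin 4 => A p.1 p.2).natAbs) × ℤ × ℤ))) := by
  by_cases hA : A = 0
  · exact ⟨Or.inl hA, fun h => absurd hA h⟩
  -- basic skew facts
  have hs : ∀ i j, A j i = -A i j := fun i j => congrFun (congrFun hskew i) j
  have hd : ∀ i, A i i = 0 := fun i => by have := hs i i; omega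
  -- the Pfaffian vanishes
  have hpf : A 0 1 * A 2 3 - A 0 2 * A 1 3 + A 0 3 * A 1 2 = 0 := by
    have hexp : A.det = (A 0 1 * A 2 3 - A 0 2 * A 1 3 + A 0 3 * A 1 2)^2 := by
      simp [Matrix.det_succ_row_zero, Fin.sum_univ_succ, Matrix.det_fin_three,
        Matrix.submatrix, Fin.succAbove, show (Fin.succ 2 : Fin 4) = 3 from rfl,
        show (Fin.castSucc 2 : Fin 4) = 2 from rfl,
        show ((1:Fin 4) < Fin.succ 2) = True from by simp [Fin.lt_def]]
      rw [hs 0 1, hs 0 2, hs 0 3, hs 1 2, hs 1 3, hs 2 3, hd 0, hd 1, hd 2, hd 3]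
      ring
    have h2 : (A 0 1 * A 2 3 - A 0 2 * A 1 3 + A 0 3 * A 1 2)^2 = 0 := by
      rw [← hexp]; exact hdet
    exact pow_eq_zero_iff (by norm_num) |>.mp h2
  -- the key Plücker identity
  have hK : ∀ i j p q, A i p * A j q - A i q * A j p = A i j * A p q := by
    intro i j p q
    fin_cases i <;> fin_cases j <;> fin_cases p <;> fin_cases q <;>
      simp only [Fin.isValue, Fin.mk_zero, Fin.mk_one,
        show (⟨2, by norm_num⟩ : Fin 4) = 2 from rfl,
        show (⟨3, by norm_num⟩ : Fin 4) = 3 from rfl,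
        hd, hs 0 1, hs 0 2, hs 0 3, hs 1 2, hs 1 3, hs 2 3] <;>
      first
        | ring1
        | linear_combination hpf
        | linear_combination -hpf
  -- a nonzero entry
  have hex : ∃ i j, A i j ≠ 0 := by
    by_contra h
    push_neg at h
    exact hA (by ext i j; simpa using h i j)
  obtain ⟨i₀, j₀, hc₀⟩ := hex
  set g : ℤ := Finset.univ.gcd (fun p : Fin 4 × Fin 4 => A p.1 p.2) with hg
  have hgdvd : ∀ p q, g ∣ A p q := fun p q => Finset.gcd_dvd (Finset.mem_univ (p, q))
  have hgne : g ≠ 0 := by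
    intro h
    rw [hg] at h
    exact hc₀ (Finset.gcd_eq_zero_iff.mp h (i₀, j₀) (Finset.mem_univ _))
  set N := LinearMap.range (Matrix.toLin' A) with hNdef
  have hcol : ∀ j, (fun i => A i j) ∈ N := by
    intro j
    refine ⟨Pi.single j 1, ?_⟩
    ext i
    simp [Matrix.toLin'_apply, Matrix.mulVec_single]
  -- every element of N is pointwise divisible by g
  have hdvdN : ∀ x ∈ N, ∀ p, g ∣ x p := by
    rintro x ⟨w, rfl⟩ p
    have h1 : Matrix.toLin' A w p = ∑ q, A p q * w q := by
      simp [Matrix.toLin'_apply, Matrix.mulVec, dotProduct]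
    rw [h1]
    exact Finset.dvd_sum fun q _ => Dvd.dvd.mul_right (hgdvd p q) _
  -- linear functionals applied to elements of N are divisible by g
  have hφ : ∀ (φ : (Fin 4 → ℤ) →ₗ[ℤ] ℤ), ∀ x ∈ N, g ∣ φ x := by
    intro φ x hx
    choose y hy using fun p => hdvdN x hx p
    have hxy : x = g • y := funext fun p => by rw [hy p]; rfl
    rw [hxy, map_smul]
    exact Dvd.intro _ rfl
  -- c₀ • x lies in the span of two fixed columns
  have hmem : ∀ x ∈ N, ∃ s t : ℤ,
      (A i₀ j₀) • x = s • (fun p => A p i₀) - t • (fun p => A p j₀) := by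
    rintro x ⟨w, rfl⟩
    refine ⟨∑ q, A q j₀ * w q, ∑ q, A q i₀ * w q, ?_⟩
    funext p
    have h1 : Matrix.toLin' A w p = ∑ q, A p q * w q := by
      simp [Matrix.toLin'_apply, Matrix.mulVec, dotProduct]
    have h2 : ∀ q : Fin 4, A i₀ j₀ * (A p q * w q)
        = A p i₀ * (A q j₀ * w q) - A p j₀ * (A q i₀ * w q) := by
      intro q
      have h := hK i₀ j₀ p q
      rw [hs p i₀, hs q i₀, hs p j₀, hs q j₀] at h
      linear_combination (-(w q)) * h
    have h3 : A i₀ j₀ * (∑ q, A p q * w q)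
        = A p i₀ * (∑ q, A q j₀ * w q) - A p j₀ * (∑ q, A q i₀ * w q) := by
      rw [Finset.mul_sum, Finset.mul_sum, Finset.mul_sum, ← Finset.sum_sub_distrib]
      exact Finset.sum_congr rfl fun q _ => h2 q
    simp only [Pi.smul_apply, Pi.sub_apply, smul_eq_mul, h1]
    rw [h3]
    ring
  obtain ⟨n, bM, bN, f, a, hsnf⟩ := Submodule.smithNormalForm (Pi.basisFun ℤ (Fin 4)) N
  have haz : ∀ i, a i ≠ 0 := by
    intro i h
    refine Module.Basis.ne_zero bN i ?_
    have : (bN i : Fin 4 → ℤ) = 0 := by rw [hsnf i, h, zero_smul]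
    exact Subtype.coe_injective this
  -- coordinate computation
  have hcoordval : ∀ i j : Fin n,
      bM.coord (f i) ((bN j : Fin 4 → ℤ)) = if i = j then a j else 0 := by
    intro i j
    rw [hsnf j]
    simp only [map_smul, Module.Basis.coord_apply, Module.Basis.repr_self, smul_eq_mul]
    rw [Finsupp.single_apply]
    by_cases h : i = j
    · subst h; simp
    · have h2 : ¬ f j = f i := fun hf => h (f.injective hf).symm
      simp [h2, h]
  -- rule out ranks other than 2
  rcases n with _ | _ | _ | m
  · -- n = 0 : N = ⊥, contradiction
    exfalso
    have hz : ∀ x : N, x = (0 : N) := by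
      intro x
      have := bN.sum_repr x
      simpa using this.symm
    have hzz := hz ⟨fun i => A i j₀, hcol j₀⟩
    exact hc₀ (congrFun (congrArg (Subtype.val) hzz) i₀)
  · -- n = 1 : contradiction via a 2×2 minor
    exfalso
    have hx1 : ∀ x ∈ N, ∃ α : ℤ, x = α • (bN 0 : Fin 4 → ℤ) := by
      intro x hx
      refine ⟨bN.repr ⟨x, hx⟩ 0, ?_⟩
      have := bN.sum_repr ⟨x, hx⟩
      rw [Fin.sum_univ_one] at this
      have h' := congrArg (Subtype.val) this
      simpa using h'.symm
    obtain ⟨α, hα⟩ := hx1 _ (hcol i₀)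
    obtain ⟨β, hβ⟩ := hx1 _ (hcol j₀)
    set b : Fin 4 → ℤ := (bN 0 : Fin 4 → ℤ) with hb
    have e1 : A i₀ i₀ = α * b i₀ := by simpa using congrFun hα i₀
    have e2 : A j₀ i₀ = α * b j₀ := by simpa using congrFun hα j₀
    have e3 : A i₀ j₀ = β * b i₀ := by simpa using congrFun hβ i₀
    have e4 : A j₀ j₀ = β * b j₀ := by simpa using congrFun hβ j₀
    have hbz : (α * b i₀) * (β * b j₀) = 0 := by
      rw [← e1, ← e4, hd i₀, hd j₀, zero_mul]
    have hcc : A i₀ j₀ * A i₀ j₀ = -((β * b i₀) * (α * b j₀)) := by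
      rw [← e3, ← e2, hs i₀ j₀]; ring
    have : A i₀ j₀ * A i₀ j₀ = 0 := by
      rw [hcc, show (β * b i₀) * (α * b j₀) = (α * b i₀) * (β * b j₀) from by ring, hbz,
        neg_zero]
    exact hc₀ (mul_self_eq_zero.mp this)
  swap
  · -- n = m + 3 : contradiction via a 3×3 minor
    exfalso
    have hglue : ∀ k : Fin (m + 3), ∃ s t : ℤ,
        (A i₀ j₀) • ((bN k : Fin 4 → ℤ)) = s • (fun p => A p i₀) - t • (fun p => A p j₀) :=
      fun k => hmem _ (bN k).2
    choose s t hst using hglue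
    set e : Fin 3 → Fin (m + 3) := fun k => ⟨k, by omega⟩ with he
    have heinj : Function.Injective e := by
      intro x y h
      rw [he] at h
      simpa [Fin.ext_iff] using congrArg Fin.val h
    set u : Fin 4 → ℤ := fun p => A p i₀ with hu
    set v : Fin 4 → ℤ := fun p => A p j₀ with hv
    set P : Matrix (Fin 3) (Fin 3) ℤ :=
      Matrix.of fun r k => bM.coord (f (e r)) ((A i₀ j₀) • (bN (e k) : Fin 4 → ℤ)) with hP
    have hP1 : P = Matrix.diagonal (fun r => A i₀ j₀ * a (e r)) := by
      ext r k
      have hPrk : P r k = A i₀ j₀ * (if e r = e k then a (e k) else 0) := by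
        rw [hP]
        simp only [Matrix.of_apply, map_smul, smul_eq_mul]
        rw [hcoordval (e r) (e k)]
      rw [hPrk]
      by_cases h : r = k
      · subst h; simp [Matrix.diagonal]
      · have h2 : ¬ e r = e k := fun hh => h (heinj hh)
        simp [Matrix.diagonal, h, h2]
    have hP2 : ∀ r k, P r k
        = s (e k) * bM.coord (f (e r)) u - t (e k) * bM.coord (f (e r)) v := by
      intro r k
      rw [hP]
      simp only [Matrix.of_apply]
      rw [hst (e k), map_sub, map_smul, map_smul, smul_eq_mul, smul_eq_mul]
    have hdet0 : P.det = 0 := by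
      rw [Matrix.det_fin_three, hP2 0 0, hP2 0 1, hP2 0 2, hP2 1 0, hP2 1 1, hP2 1 2,
        hP2 2 0, hP2 2 1, hP2 2 2]
      ring
    rw [hP1, Matrix.det_diagonal] at hdet0
    obtain ⟨r, _, hr⟩ := Finset.prod_eq_zero_iff.mp hdet0
    rcases mul_eq_zero.mp hr with h | h
    · exact hc₀ h
    · exact haz _ h
  -- now n = 2 : the main case
  set b0 : Fin 4 → ℤ := (bN 0 : Fin 4 → ℤ) with hb0def
  set b1 : Fin 4 → ℤ := (bN 1 : Fin 4 → ℤ) with hb1def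
  set u : Fin 4 → ℤ := bM (f 0) with hu
  set v : Fin 4 → ℤ := bM (f 1) with hv
  have hb0 : b0 = a 0 • u := hsnf 0
  have hb1 : b1 = a 1 • v := hsnf 1
  have hNspan : N = Submodule.span ℤ {b0, b1} := by
    apply le_antisymm
    · intro x hx
      have := bN.sum_repr ⟨x, hx⟩
      rw [Fin.sum_univ_two] at this
      have h' := congrArg (Subtype.val) this
      simp only [Submodule.coe_add, SetLike.val_smul] at h'
      rw [← h']
      exact Submodule.add_mem _
        (Submodule.smul_mem _ _ (Submodule.subset_span (by simp [hb0def])))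
        (Submodule.smul_mem _ _ (Submodule.subset_span (by simp [hb1def])))
    · rw [Submodule.span_le]
      rintro y hy
      rcases Set.mem_insert_iff.mp hy with rfl | hy
      · exact (bN 0).2
      · rw [Set.mem_singleton_iff.mp hy]
        exact (bN 1).2
  have hrep : ∀ x ∈ N, ∃ α β : ℤ, x = α • b0 + β • b1 := by
    intro x hx
    rw [hNspan] at hx
    obtain ⟨α, β, h⟩ := Submodule.mem_span_pair.mp hx
    exact ⟨α, β, h.symm⟩
  -- minors of pairs of elements of N are divisible by a 0 * a 1
  have hminor : ∀ x ∈ N, ∀ y ∈ N, ∀ r s' : Fin 4,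
      a 0 * a 1 ∣ x r * y s' - x s' * y r := by
    intro x hx y hy r s'
    obtain ⟨α, β, hxe⟩ := hrep x hx
    obtain ⟨γ, δ, hye⟩ := hrep y hy
    refine ⟨(α * δ - β * γ) * (u r * v s' - u s' * v r), ?_⟩
    have hxr : ∀ p, x p = α * (a 0 * u p) + β * (a 1 * v p) := by
      intro p
      rw [hxe, hb0, hb1]
      simp [mul_assoc]
    have hyr : ∀ p, y p = γ * (a 0 * u p) + δ * (a 1 * v p) := by
      intro p
      rw [hye, hb0, hb1]
      simp [mul_assoc]
    rw [hxr r, hxr s', hyr r, hyr s']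
    ring
  -- a 0 * a 1 divides all products of two entries of A
  have hproddvd : ∀ r s' p q : Fin 4, a 0 * a 1 ∣ A r s' * A p q := by
    intro r s' p q
    have h1 := hminor _ (hcol p) _ (hcol q) r s'
    have h2 : A r p * A s' q - A s' p * A r q = A r s' * A p q := by
      linear_combination hK r s' p q
    rw [← h2]
    exact h1
  -- g divides a 0 and a 1
  have hga : ∀ i : Fin 2, g ∣ a i := by
    intro i
    have hcv : bM.coord (f i) ((bN i : Fin 4 → ℤ)) = a i := by
      rw [hcoordval i i]; simp
    rw [← hcv]
    exact hφ _ _ (bN i).2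
  -- Int.gcd (a 0) (a 1) is associated to g
  have hgcd1 : (↑(Int.gcd (a 0) (a 1)) : ℤ) ∣ g := by
    rw [hg]
    refine Finset.dvd_gcd ?_
    rintro ⟨p, q⟩ -
    obtain ⟨α, β, hxe⟩ := hrep _ (hcol q)
    have hpq : A p q = α * b0 p + β * b1 p := by
      have := congrFun hxe p
      simpa using this
    rw [hpq, hb0, hb1]
    simp only [Pi.smul_apply, smul_eq_mul]
    exact dvd_add
      (Dvd.dvd.mul_left (Dvd.dvd.mul_right (Int.gcd_dvd_left _ _) _) _)
      (Dvd.dvd.mul_left (Dvd.dvd.mul_right (Int.gcd_dvd_right _ _) _) _)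
  have hgcd2 : g ∣ (↑(Int.gcd (a 0) (a 1)) : ℤ) := Int.dvd_coe_gcd (hga 0) (hga 1)
  have hgcdeq : Int.gcd (a 0) (a 1) = g.natAbs := by
    have := Int.associated_iff_natAbs.mp (associated_of_dvd_dvd hgcd1 hgcd2)
    simpa using this
  -- a 0 * a 1 is associated to g * g
  have hgg1 : g * g ∣ a 0 * a 1 := mul_dvd_mul (hga 0) (hga 1)
  have hdvdxg : ∀ r s' : Fin 4, a 0 * a 1 ∣ A r s' * g := by
    intro r s'
    have h1 : a 0 * a 1 ∣ Finset.univ.gcd (fun p : Fin 4 × Fin 4 => A r s' * A p.1 p.2) :=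
      Finset.dvd_gcd fun p _ => hproddvd r s' p.1 p.2
    rw [Finset.gcd_mul_left, ← Int.abs_eq_normalize, ← hg] at h1
    rcases abs_cases (A r s') with ⟨he, _⟩ | ⟨he, _⟩
    · rwa [he] at h1
    · rw [he, neg_mul] at h1
      exact dvd_neg.mp h1
  have hgg2 : a 0 * a 1 ∣ g * g := by
    have h1 : a 0 * a 1 ∣ Finset.univ.gcd (fun p : Fin 4 × Fin 4 => A p.1 p.2 * g) :=
      Finset.dvd_gcd fun p _ => hdvdxg p.1 p.2
    rwa [Finset.gcd_mul_right, ← hg, show normalize g = g from by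
      rw [hg]; exact Finset.normalize_gcd] at h1
  -- natAbs arithmetic : |a 0| = |a 1| = g.natAbs
  have hGne : g.natAbs ≠ 0 := fun h => hgne (Int.natAbs_eq_zero.mp h)
  have hprodeq : (a 0).natAbs * (a 1).natAbs = g.natAbs * g.natAbs := by
    have h1 : (a 0 * a 1).natAbs ∣ (g * g).natAbs := Int.natAbs_dvd_natAbs.mpr hgg2
    have h2 : (g * g).natAbs ∣ (a 0 * a 1).natAbs := Int.natAbs_dvd_natAbs.mpr hgg1
    have := Nat.dvd_antisymm h1 h2
    simpa [Int.natAbs_mul] using this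
  obtain ⟨s₁, hs₁⟩ : g.natAbs ∣ (a 0).natAbs := by
    rw [← hgcdeq]
    exact Nat.gcd_dvd_left _ _
  obtain ⟨t₁, ht₁⟩ : g.natAbs ∣ (a 1).natAbs := by
    rw [← hgcdeq]
    exact Nat.gcd_dvd_right _ _
  have hst1 : s₁ * t₁ = 1 := by
    have hGG : 0 < g.natAbs * g.natAbs := Nat.pos_of_ne_zero (by
      intro h
      rcases Nat.mul_eq_zero.mp h with h | h <;> exact hGne h)
    have : g.natAbs * g.natAbs * (s₁ * t₁) = g.natAbs * g.natAbs * 1 := by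
      rw [mul_one]
      rw [hs₁, ht₁] at hprodeq
      linarith [hprodeq]
    exact Nat.eq_of_mul_eq_mul_left hGG this
  have hA0 : (a 0).natAbs = g.natAbs := by
    rw [hs₁, Nat.eq_one_of_mul_eq_one_right hst1, mul_one]
  have hA1 : (a 1).natAbs = g.natAbs := by
    rw [ht₁, Nat.eq_one_of_mul_eq_one_left hst1, mul_one]
  -- the rank
  have hmv : Matrix.toLin' A = A.mulVecLin := by
    ext w i
    simp [Matrix.toLin'_apply]
  have hrank : A.rank = 2 := by
    have h1 : A.rank = Module.finrank ℤ N := by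
      rw [hNdef, hmv]
      rfl
    rw [h1, Module.finrank_eq_card_basis bN, Fintype.card_fin]
  refine ⟨Or.inr hrank, fun _ => ?_⟩
  -- construct the permutation sending 0 ↦ f 0, 1 ↦ f 1
  have hf01 : f 0 ≠ f 1 := fun h => by simpa using f.injective h
  set σ₁ : Equiv.Perm (Fin 4) := Equiv.swap 0 (f 0) with hσ₁
  set σ₂ : Equiv.Perm (Fin 4) := Equiv.swap 1 (σ₁ (f 1)) with hσ₂
  set π : Equiv.Perm (Fin 4) := σ₂.trans σ₁ with hπ
  have hσ₁f1ne0 : σ₁ (f 1) ≠ 0 := by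
    intro h
    have h2 : σ₁ (f 1) = σ₁ 0 → f 1 = 0 := fun hh => σ₁.injective hh
    rw [hσ₁] at h
    rcases eq_or_ne (f 1) 0 with h3 | h3
    · rw [h3] at h
      rw [Equiv.swap_apply_left] at h
      exact hf01 (by rw [h, h3])
    · rcases eq_or_ne (f 1) (f 0) with h4 | h4
      · exact hf01 h4.symm
      · rw [Equiv.swap_apply_of_ne_of_ne h3 h4] at h
        exact h3 h
  have hπ0 : π 0 = f 0 := by
    rw [hπ]
    simp only [Equiv.trans_apply, hσ₂]
    rw [Equiv.swap_apply_of_ne_of_ne (by decide) (Ne.symm hσ₁f1ne0), hσ₁,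
      Equiv.swap_apply_left]
  have hπ1 : π 1 = f 1 := by
    rw [hπ]
    simp only [Equiv.trans_apply, hσ₂]
    rw [Equiv.swap_apply_left, hσ₁, Equiv.swap_apply_self]
  -- the reordered basis
  set B : Module.Basis (Fin 4) ℤ (Fin 4 → ℤ) := bM.reindex π.symm with hB
  have hBj : ∀ j, B j = bM (π j) := by
    intro j
    rw [hB, Module.Basis.reindex_apply]
    simp
  set c' : Fin 4 → ℤ := fun j => if j = 0 then a 0 else if j = 1 then a 1 else 0 with hc'
  set eqF := B.equivFun with heqF
  have hw0 : ∀ j, eqF b0 j = if (0 : Fin 4) = j then a 0 else 0 := by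
    intro j
    have hb0B : b0 = a 0 • B 0 := by rw [hb0, hu, ← hπ0, ← hBj 0]
    rw [hb0B, map_smul]
    simp [heqF, Module.Basis.equivFun_self, Finsupp.single_apply, mul_ite]
  have hw1 : ∀ j, eqF b1 j = if (1 : Fin 4) = j then a 1 else 0 := by
    intro j
    have hb1B : b1 = a 1 • B 1 := by rw [hb1, hv, ← hπ1, ← hBj 1]
    rw [hb1B, map_smul]
    simp [heqF, Module.Basis.equivFun_self, Finsupp.single_apply, mul_ite]
  have hmap : Submodule.map (eqF : (Fin 4 → ℤ) →ₗ[ℤ] (Fin 4 → ℤ)) N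
      = Submodule.pi Set.univ (fun j => (Ideal.span {c' j} : Submodule ℤ ℤ)) := by
    rw [hNspan, Submodule.map_span, Set.image_insert_eq, Set.image_singleton]
    apply le_antisymm
    · rw [Submodule.span_le]
      rintro y hy
      rcases Set.mem_insert_iff.mp hy with rfl | hy
      · intro j _
        rw [SetLike.mem_coe, Ideal.mem_span_singleton]
        fin_cases j <;> simp [hw0, hc']
      · rw [Set.mem_singleton_iff.mp hy]
        intro j _
        rw [SetLike.mem_coe, Ideal.mem_span_singleton]
        fin_cases j <;> simp [hw1, hc']
    · intro x hx
      have hx0 : a 0 ∣ x 0 := by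
        have := Submodule.mem_pi.mp hx 0 (Set.mem_univ _)
        rw [Ideal.mem_span_singleton] at this
        simpa [hc'] using this
      have hx1 : a 1 ∣ x 1 := by
        have := Submodule.mem_pi.mp hx 1 (Set.mem_univ _)
        rw [Ideal.mem_span_singleton] at this
        simpa [hc'] using this
      have hx2 : x 2 = 0 := by
        have := Submodule.mem_pi.mp hx 2 (Set.mem_univ _)
        rw [Ideal.mem_span_singleton] at this
        simpa [hc', zero_dvd_iff] using this
      have hx3 : x 3 = 0 := by
        have := Submodule.mem_pi.mp hx 3 (Set.mem_univ _)
        rw [Ideal.mem_span_singleton] at this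
        simpa [hc', zero_dvd_iff] using this
      obtain ⟨k0, hk0⟩ := hx0
      obtain ⟨k1, hk1⟩ := hx1
      rw [Submodule.mem_span_pair]
      refine ⟨k0, k1, ?_⟩
      funext j
      have := hw0 j
      have := hw1 j
      fin_cases j <;>
        simp [hw0, hw1, hk0, hk1, hx2, hx3, mul_comm]
  -- the quotient isomorphisms
  have E1 := Submodule.Quotient.equiv N
    (Submodule.pi Set.univ (fun j => (Ideal.span {c' j} : Submodule ℤ ℤ))) eqF hmap
  have E2 := Submodule.quotientPi (fun j : Fin 4 => (Ideal.span {c' j} : Submodule ℤ ℤ))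
  have F : ((Fin 4 → ℤ) ⧸ N) ≃+ ((j : Fin 4) → ℤ ⧸ (Ideal.span {c' j} : Submodule ℤ ℤ)) :=
    (E1.trans E2).toAddEquiv
  have G := piFin4AddEquiv (B := fun j : Fin 4 => ℤ ⧸ (Ideal.span {c' j} : Submodule ℤ ℤ))
  have hc'0 : c' 0 = a 0 := by simp [hc']
  have hc'1 : c' 1 = a 1 := by simp [hc']
  have hc'2 : c' 2 = 0 := by simp [hc']
  have hc'3 : c' 3 = 0 := by simp [hc']
  have Egoal : ((Fin 4 → ℤ) ⧸ N) ≃+ ZMod ((a 0).natAbs) × ZMod ((a 1).natAbs) × ℤ × ℤ := by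
    refine (F.trans G).trans ?_
    refine AddEquiv.prodCongr ?_ (AddEquiv.prodCongr ?_ (AddEquiv.prodCongr ?_ ?_))
    · rw [hc'0]
      exact (Int.quotientSpanEquivZMod (a 0)).toAddEquiv
    · rw [hc'1]
      exact (Int.quotientSpanEquivZMod (a 1)).toAddEquiv
    · rw [hc'2]
      exact (Submodule.quotEquivOfEqBot _ (by simp)).toAddEquiv
    · rw [hc'3]
      exact (Submodule.quotEquivOfEqBot _ (by simp)).toAddEquiv
  rw [hA0, hA1] at Egoal
  exact ⟨Egoal⟩
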